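/- Let B be a Banach space and let E, F be closed subspaces with B = E ⊕ F (topological direct sum), and let π_{E⊕F} : B → E denote the bounded projection onto E along F. If E' is a closed subspace of B such that d_H(E, E') < |π_{E⊕F}|^{-1}, then B = E' ⊕ F. -/

import Mathlib

open MeasureTheory Filter Metric Module Submodule Set

noncomputable section

namespace BY

variable {B B' : Type*}

/-- The unit sphere of a subspace `E`. -/
def subSphere [NormedAddCommGroup B] [NormedSpace ℝ B] (E : Submodule ℝ B) : Set B :=
  {v : B | v ∈ E ∧ ‖v‖ = 1}

/-- `d_H(E, E')`: the Hausdorff distance between the unit spheres of `E` and `E'`. -/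
def dH [NormedAddCommGroup B] [NormedSpace ℝ B] (E E' : Submodule ℝ B) : ℝ :=
  Metric.hausdorffDist (subSphere E) (subSphere E')

/-- The supremum of `‖π x‖` over `x ∈ S`, where `π` is the projection onto `E` along `F`. -/
def projNormOn [NormedAddCommGroup B] [NormedSpace ℝ B] (E F : Submodule ℝ B)
    (h : IsCompl E F) (S : Set B) : ℝ :=
  sSup ((fun x => ‖(E.linearProjOfIsCompl F h x : B)‖) '' S)

/-- `|π_{E⊕F}|`: the operator norm of the projection onto `E` along `F`. -/
def projNorm [NormedAddCommGroup B] [NormedSpace ℝ B] (E F : Submodule ℝ B)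
    (h : IsCompl E F) : ℝ :=
  projNormOn E F h (Metric.closedBall 0 1)

/-- `α(E, F) = inf { ‖e - f‖ : e ∈ E, ‖e‖ = 1, f ∈ F }`. -/
def alphaAngle [NormedAddCommGroup B] [NormedSpace ℝ B] (E F : Submodule ℝ B) : ℝ :=
  sInf {r : ℝ | ∃ e ∈ E, ∃ f ∈ F, ‖e‖ = 1 ∧ r = ‖e - f‖}

/-- `ω_k`: the volume of the Euclidean unit ball in `ℝ^k`. -/
def euclideanBallVol (k : ℕ) : ENNReal :=
  volume (Metric.closedBall (0 : EuclideanSpace ℝ (Fin k)) 1)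

/-- `μ` is the induced volume `m_E` on the `k`-dimensional subspace `E`: the (unique) Haar
measure on `E` assigning mass `ω_k` to the unit ball of `E`. -/
def IsInducedVolume [NormedAddCommGroup B] [NormedSpace ℝ B] [MeasurableSpace B]
    (E : Submodule ℝ B) (k : ℕ) (μ : Measure E) : Prop :=
  Measure.IsAddHaarMeasure μ ∧ μ {v : E | ‖v‖ ≤ 1} = euclideanBallVol k

/-- `det(A|E)`, computed with respect to induced volumes `μE` on `E` and `μF` on a
subspace `F` containing `A(E)`: the ratio `μF(A(B_E)) / μE(B_E)` where `B_E` is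
the unit ball of `E`. -/
def detIn [NormedAddCommGroup B] [NormedSpace ℝ B] [NormedAddCommGroup B'] [NormedSpace ℝ B']
    [MeasurableSpace B] [MeasurableSpace B']
    (A : B →L[ℝ] B') (E : Submodule ℝ B) (F : Submodule ℝ B')
    (μE : Measure E) (μF : Measure F) : ℝ :=
  (μF {w : F | ∃ v : B, v ∈ E ∧ ‖v‖ ≤ 1 ∧ A v = (w : B')}).toReal /
    (μE {v : E | ‖v‖ ≤ 1}).toReal

/-- `P[v₁, …, v_k]`: the parallelepiped spanned by the vectors `v i`. -/
def pped [AddCommGroup B] [Module ℝ B] {k : ℕ} (v : Fin k → B) : Set B :=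
  {x : B | ∃ a : Fin k → ℝ, (∀ i, a i ∈ Set.Icc (0 : ℝ) 1) ∧ x = ∑ i, a i • v i}

/-- `N[v₁, …, v_k]`: the sum of the norms of the projections, within the span of the `v i`,
onto each `⟨v i⟩` along the span of the other basis vectors. -/
def Nquan [NormedAddCommGroup B] [NormedSpace ℝ B] {k : ℕ} (v : Fin k → B) : ℝ :=
  ∑ i, sSup {r : ℝ | ∃ a : Fin k → ℝ, ‖∑ j, a j • v j‖ ≤ 1 ∧ r = ‖a i • v i‖}

/-- The operator norm of the restriction of `A` to the subspace `E`. -/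
def opNormOnSub [NormedAddCommGroup B] [NormedSpace ℝ B] [NormedAddCommGroup B']
    [NormedSpace ℝ B'] (A : B →L[ℝ] B') (E : Submodule ℝ B) : ℝ :=
  sSup {r : ℝ | ∃ v ∈ E, ‖v‖ ≤ 1 ∧ r = ‖A v‖}

/-- The `n`-th iterate (`n ∈ ℤ`) of the invertible pair `(f, g)`, `g = f⁻¹`. -/
def zIter {X : Type*} (f g : X → X) (n : ℤ) (x : X) : X :=
  if 0 ≤ n then f^[n.toNat] x else g^[(-n).toNat] x

/-- `ψ'(x) = sup_{n ∈ ℤ} e^{-|n| δ} ψ(f^n x)`. -/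
def psiSup {X : Type*} (f g : X → X) (ψ : X → ℝ) (δ : ℝ) (x : X) : ℝ :=
  sSup (Set.range fun n : ℤ => Real.exp (-|(n : ℝ)| * δ) * ψ (zIter f g n x))

/-- The cocycle `T^n_x = T_{f^{n-1} x} ∘ ⋯ ∘ T_x`. -/
def cocycle {X : Type*} [NormedAddCommGroup B] [NormedSpace ℝ B]
    (f : X → X) (T : X → B →L[ℝ] B) : ℕ → X → B →L[ℝ] B
  | 0, _ => ContinuousLinearMap.id ℝ B
  | n + 1, x => (cocycle f T n (f x)).comp (T x)

end BY

end

section Aux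

variable {B : Type*} [NormedAddCommGroup B] [NormedSpace ℝ B]

lemma aux_exists_subSphere {E : Submodule ℝ B} (hE : E ≠ ⊥) :
    ∃ v, v ∈ BY.subSphere E := by
  obtain ⟨v, hv, hv0⟩ := Submodule.exists_mem_ne_zero_of_ne_bot hE
  refine ⟨‖v‖⁻¹ • v, E.smul_mem _ hv, ?_⟩
  rw [norm_smul, norm_inv, norm_norm, inv_mul_cancel₀ (norm_ne_zero_iff.2 hv0)]

lemma aux_subSphere_bounded (E : Submodule ℝ B) :
    Bornology.IsBounded (BY.subSphere E) := by
  refine (Metric.isBounded_closedBall (x := (0 : B)) (r := 1)).subset ?_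
  intro v hv
  rw [Metric.mem_closedBall, dist_zero_right, hv.2]

end Aux

set_option maxHeartbeats 1000000 in
set_option synthInstance.maxHeartbeats 400000 in
/-- Lemma 2.3 of the paper. Let `B` be a Banach space, `E, F` closed
subspaces with `B = E ⊕ F`. If `E'` is a closed subspace with
`d_H(E, E') < |π_{E⊕F}|⁻¹`, then `B = E' ⊕ F`. -/
theorem statement0 {B : Type*} [NormedAddCommGroup B] [NormedSpace ℝ B] [CompleteSpace B]
    (E F E' : Submodule ℝ B)
    (hEc : IsClosed (E : Set B)) (hFc : IsClosed (F : Set B)) (hE'c : IsClosed (E' : Set B))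
    (hEbot : E ≠ ⊥) (hE'bot : E' ≠ ⊥)
    (h : IsCompl E F)
    (hd : BY.dH E E' < (BY.projNorm E F h)⁻¹) :
    IsCompl E' F := by
  classical
  haveI : CompleteSpace E' := hE'c.completeSpace_coe
  set π := E.linearProjOfIsCompl F h with hπdef
  set P := E.linearProjOfClosedCompl F h hEc hFc with hPdef
  have hPπ : ∀ x : B, (π x : B) = (P x : B) := fun x =>
    congrArg Subtype.val
      (congrFun (Submodule.coe_continuous_linearProjOfClosedCompl' h hEc hFc) x).symm
  set M := BY.projNorm E F h with hMdef
  have hMS : M = sSup ((fun x => ‖(π x : B)‖) '' Metric.closedBall (0 : B) 1) := rfl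
  have hbdd : BddAbove ((fun x => ‖(π x : B)‖) '' Metric.closedBall (0 : B) 1) := by
    refine ⟨‖P‖, ?_⟩
    rintro y ⟨x, hx, rfl⟩
    dsimp only
    rw [hPπ]
    calc ‖(P x : B)‖ = ‖P x‖ := rfl
      _ ≤ ‖P‖ * ‖x‖ := P.le_opNorm x
      _ ≤ ‖P‖ * 1 := by
          have hx1 : ‖x‖ ≤ 1 := by rwa [← dist_zero_right, ← Metric.mem_closedBall]
          exact mul_le_mul_of_nonneg_left hx1 (norm_nonneg P)
      _ = ‖P‖ := mul_one _
  obtain ⟨eu, heu⟩ := aux_exists_subSphere hEbot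
  have hπeu : (π eu : B) = eu := congrArg Subtype.val
    (Submodule.linearProjOfIsCompl_apply_left h ⟨eu, heu.1⟩)
  have hM1 : (1 : ℝ) ≤ M := by
    rw [hMS]
    refine le_csSup hbdd ⟨eu, ?_, ?_⟩
    · rw [Metric.mem_closedBall, dist_zero_right, heu.2]
    · dsimp only
      rw [hπeu, heu.2]
  have hMpos : (0 : ℝ) < M := lt_of_lt_of_le zero_lt_one hM1
  have hMx : ∀ x : B, ‖(π x : B)‖ ≤ M * ‖x‖ := by
    intro x
    rcases eq_or_ne x 0 with rfl | hx0
    · simp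
    · have hnx : (0 : ℝ) < ‖x‖ := norm_pos_iff.2 hx0
      have hu : ‖x‖⁻¹ • x ∈ Metric.closedBall (0 : B) 1 := by
        rw [Metric.mem_closedBall, dist_zero_right, norm_smul, norm_inv, norm_norm,
          inv_mul_cancel₀ hnx.ne']
      have h1 : ‖(π (‖x‖⁻¹ • x) : B)‖ ≤ M := by
        rw [hMS]; exact le_csSup hbdd ⟨_, hu, rfl⟩
      have h2 : (π (‖x‖⁻¹ • x) : B) = ‖x‖⁻¹ • (π x : B) := by
        rw [_root_.map_smul]; rfl
      rw [h2, norm_smul, norm_inv, norm_norm] at h1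
      calc ‖(π x : B)‖ = ‖x‖ * (‖x‖⁻¹ * ‖(π x : B)‖) := by
            field_simp
        _ ≤ ‖x‖ * M := mul_le_mul_of_nonneg_left h1 hnx.le
        _ = M * ‖x‖ := mul_comm _ _
  set d := BY.dH E E' with hddef
  have hd0 : 0 ≤ d := Metric.hausdorffDist_nonneg
  have hMd : M * d < 1 := by
    have := mul_lt_mul_of_pos_left hd hMpos
    rwa [mul_inv_cancel₀ hMpos.ne'] at this
  set c := 1 - M * d with hcdef
  have hc : 0 < c := by rw [hcdef]; linarith
  obtain ⟨eu', heu'⟩ := aux_exists_subSphere hE'bot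
  have hfin : EMetric.hausdorffEdist (BY.subSphere E) (BY.subSphere E') ≠ ⊤ :=
    Metric.hausdorffEdist_ne_top_of_nonempty_of_bounded ⟨eu, heu⟩ ⟨eu', heu'⟩
      (aux_subSphere_bounded E) (aux_subSphere_bounded E')
  have hdH : d = Metric.hausdorffDist (BY.subSphere E) (BY.subSphere E') := rfl
  have happrox : ∀ x ∈ BY.subSphere E, ∀ ε > (0 : ℝ),
      ∃ y ∈ BY.subSphere E', dist x y < d + ε := by
    intro x hx ε hε
    exact Metric.exists_dist_lt_of_hausdorffDist_lt hx (by rw [← hdH]; linarith) hfin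
  have happrox' : ∀ y ∈ BY.subSphere E', ∀ ε > (0 : ℝ),
      ∃ x ∈ BY.subSphere E, dist x y < d + ε := by
    intro y hy ε hε
    exact Metric.exists_dist_lt_of_hausdorffDist_lt' hy (by rw [← hdH]; linarith) hfin
  -- lower bound on the projection restricted to E'
  have hlow_unit : ∀ u ∈ BY.subSphere E', c ≤ ‖(π u : B)‖ := by
    intro u hu
    by_contra hlt
    push_neg at hlt
    set ε := (c - ‖(π u : B)‖) / M with hεdef
    have hε : 0 < ε := div_pos (by linarith) hMpos
    obtain ⟨e, he, hde⟩ := happrox' u hu ε hε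
    have hπe : (π e : B) = e := congrArg Subtype.val
      (Submodule.linearProjOfIsCompl_apply_left h ⟨e, he.1⟩)
    have h1 : (π e : B) - (π u : B) = (π (e - u) : B) := by rw [_root_.map_sub]; rfl
    have h2 : ‖(π (e - u) : B)‖ ≤ M * ‖e - u‖ := hMx _
    have h3 : ‖e - u‖ < d + ε := by rwa [← dist_eq_norm]
    have h4 : M * ‖e - u‖ ≤ M * (d + ε) := by nlinarith [norm_nonneg (e - u)]
    have h5 : ‖(π e : B)‖ - ‖(π u : B)‖ ≤ ‖(π e : B) - (π u : B)‖ := norm_sub_norm_le _ _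
    have h6 : M * ε = c - ‖(π u : B)‖ := by
      rw [hεdef]; field_simp
    have h7 : M * ‖e - u‖ < M * (d + ε) := by
      exact mul_lt_mul_of_pos_left h3 hMpos
    rw [h1] at h5
    rw [hπe, he.2] at h5
    have : 1 - ‖(π u : B)‖ < M * (d + ε) := lt_of_le_of_lt (le_trans h5 h2) h7
    rw [mul_add, h6] at this
    rw [hcdef] at this
    linarith
  have hlow : ∀ x ∈ E', c * ‖x‖ ≤ ‖(π x : B)‖ := by
    intro x hx
    rcases eq_or_ne x 0 with rfl | hx0
    · simp
    · have hnx : (0 : ℝ) < ‖x‖ := norm_pos_iff.2 hx0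
      have hu : ‖x‖⁻¹ • x ∈ BY.subSphere E' :=
        ⟨E'.smul_mem _ hx, by
          rw [norm_smul, norm_inv, norm_norm, inv_mul_cancel₀ hnx.ne']⟩
      have h1 := hlow_unit _ hu
      have h2 : (π (‖x‖⁻¹ • x) : B) = ‖x‖⁻¹ • (π x : B) := by rw [_root_.map_smul]; rfl
      rw [h2, norm_smul, norm_inv, norm_norm] at h1
      calc c * ‖x‖ ≤ (‖x‖⁻¹ * ‖(π x : B)‖) * ‖x‖ :=
            mul_le_mul_of_nonneg_right h1 hnx.le
        _ = ‖(π x : B)‖ := by field_simp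
  -- the image of E' under the projection
  set G := Submodule.map (E.subtype ∘ₗ (E.linearProjOfIsCompl F h)) E' with hGdef
  have hGapp : ∀ x : B, (E.subtype ∘ₗ (E.linearProjOfIsCompl F h)) x = (π x : B) := fun x => rfl
  have hGclosed : IsClosed (G : Set B) := by
    set f : E' → B := fun x => (π (x : B) : B) with hfdef
    have hfu : UniformContinuous f := by
      have hfe : f = fun x : E' => (P (x : B) : B) := funext fun x => hPπ _
      rw [hfe]
      exact uniformContinuous_subtype_val.comp
        (P.uniformContinuous.comp uniformContinuous_subtype_val)
    have hanti : AntilipschitzWith (c⁻¹).toNNReal f := by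
      refine AntilipschitzWith.of_le_mul_dist fun x y => ?_
      have hsub : f x - f y = (π ((x : B) - (y : B)) : B) := by
        have h0 : π ((x : B) - (y : B)) = π (x : B) - π (y : B) := _root_.map_sub π _ _
        simp only [hfdef, h0, Submodule.coe_sub]
      have h1 : c * ‖(x : B) - (y : B)‖ ≤ ‖f x - f y‖ := by
        rw [hsub]; exact hlow _ (E'.sub_mem x.2 y.2)
      have hdxy : dist x y = ‖(x : B) - (y : B)‖ := by
        rw [Subtype.dist_eq, dist_eq_norm]
      have hdf : dist (f x) (f y) = ‖f x - f y‖ := dist_eq_norm _ _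
      rw [hdxy, hdf, Real.coe_toNNReal _ (inv_nonneg.2 hc.le)]
      rw [le_inv_mul_iff₀ hc]
      linarith
    have hrange : Set.range f = (G : Set B) := by
      ext y
      constructor
      · rintro ⟨x, rfl⟩
        exact ⟨(x : B), x.2, rfl⟩
      · rintro ⟨x, hx, rfl⟩
        exact ⟨⟨x, hx⟩, rfl⟩
    rw [← hrange]
    exact hanti.isClosed_range hfu
  -- surjectivity of the projection: E ≤ G
  have hEG : E ≤ G := by
    by_contra hne
    obtain ⟨e, heE, heG⟩ := SetLike.not_le_iff_exists.mp hne
    clear hne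
    set G' : Submodule ℝ E := G.comap E.subtype with hG'def
    have hG'set : (G' : Set E) = (Subtype.val : E → B) ⁻¹' (G : Set B) := rfl
    have hG'c : IsClosed (G' : Set E) := by
      rw [hG'set]; exact hGclosed.preimage continuous_subtype_val
    have hx : ∃ x : E, x ∉ G' := ⟨⟨e, heE⟩, fun hmem => heG hmem⟩
    set r := (1 + M * d) / 2 with hrdef
    have hr1 : r < 1 := by rw [hrdef]; linarith
    have hrMd : M * d < r := by rw [hrdef]; linarith
    obtain ⟨x₀, hx₀, hx₀y⟩ := riesz_lemma hG'c hx hr1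
    have hx₀0 : x₀ ≠ 0 := fun h0 => hx₀ (h0 ▸ G'.zero_mem)
    have hnx : (0 : ℝ) < ‖x₀‖ := norm_pos_iff.2 hx₀0
    set e₀ : B := ‖x₀‖⁻¹ • (x₀ : B) with he₀def
    have he₀E : e₀ ∈ E := E.smul_mem _ x₀.2
    have hcoe : ‖(x₀ : B)‖ = ‖x₀‖ := rfl
    have he₀n : ‖e₀‖ = 1 := by
      rw [he₀def, norm_smul, norm_inv, norm_norm, hcoe, inv_mul_cancel₀ hnx.ne']
    set ε := (r - M * d) / (2 * M) with hεdef
    have hε : 0 < ε := div_pos (by linarith) (by linarith)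
    obtain ⟨e', he', hdist⟩ := happrox e₀ ⟨he₀E, he₀n⟩ ε hε
    set y := π e' with hydef
    have hyG' : y ∈ G' := ⟨e', he'.1, rfl⟩
    -- key1 : r ≤ ‖e₀ - y‖
    have hz : (‖x₀‖⁻¹ • x₀ - y : E) = ‖x₀‖⁻¹ • (x₀ - ‖x₀‖ • y) := by
      rw [smul_sub, smul_smul, inv_mul_cancel₀ hnx.ne', one_smul]
    have hyG'2 : ‖x₀‖ • y ∈ G' := G'.smul_mem _ hyG'
    have hb := hx₀y _ hyG'2
    have key1 : r ≤ ‖(‖x₀‖⁻¹ • x₀ - y : E)‖ := by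
      rw [hz, norm_smul, norm_inv, norm_norm]
      rw [← mul_le_mul_iff_of_pos_left hnx]
      calc ‖x₀‖ * r = r * ‖x₀‖ := mul_comm _ _
        _ ≤ ‖x₀ - ‖x₀‖ • y‖ := hb
        _ = ‖x₀‖ * (‖x₀‖⁻¹ * ‖x₀ - ‖x₀‖ • y‖) := (mul_inv_cancel_left₀ hnx.ne' _).symm
    have hcoe2 : ((‖x₀‖⁻¹ • x₀ - y : E) : B) = e₀ - (y : B) := rfl
    have key1' : r ≤ ‖e₀ - (y : B)‖ := by
      rw [← hcoe2]; exact key1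
    -- key2 : ‖e₀ - y‖ < r
    have hπe₀ : (π e₀ : B) = e₀ := congrArg Subtype.val
      (Submodule.linearProjOfIsCompl_apply_left h ⟨e₀, he₀E⟩)
    have hsub : e₀ - (y : B) = (π (e₀ - e') : B) := by
      rw [_root_.map_sub]
      show _ = (π e₀ : B) - (π e' : B)
      rw [hπe₀, hydef]
    have key2 : ‖e₀ - (y : B)‖ < r := by
      rw [hsub]
      have h1 : ‖(π (e₀ - e') : B)‖ ≤ M * ‖e₀ - e'‖ := hMx _
      have h2 : ‖e₀ - e'‖ < d + ε := by rwa [← dist_eq_norm]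
      have h3 : M * ‖e₀ - e'‖ < M * (d + ε) := mul_lt_mul_of_pos_left h2 hMpos
      have h4 : M * ε = (r - M * d) / 2 := by
        rw [hεdef]; field_simp
      have : M * (d + ε) < r := by rw [mul_add, h4]; linarith
      linarith
    linarith
  -- conclude
  constructor
  · rw [Submodule.disjoint_def]
    intro x hxE' hxF
    have h0 : π x = 0 := Submodule.projectionOnto_apply_of_mem_right h hxF
    have h1 := hlow x hxE'
    rw [h0] at h1
    simp only [Submodule.coe_zero, norm_zero] at h1
    have : ‖x‖ = 0 := le_antisymm (by nlinarith [norm_nonneg x]) (norm_nonneg x)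
    exact norm_eq_zero.mp this
  · rw [codisjoint_iff, eq_top_iff]
    intro b _
    have hkerF : ∀ z : B, z - (π z : B) ∈ F := by
      intro z
      rw [← Submodule.linearProjOfIsCompl_apply_eq_zero_iff (h := h)]
      rw [_root_.map_sub, sub_eq_zero]; exact (Submodule.projectionOnto_apply_left h (π z)).symm
    have hpG : ((π b : B)) ∈ G := hEG (π b).2
    obtain ⟨x, hxE', hxeq⟩ := hpG
    have hxeq' : (π x : B) = (π b : B) := hxeq
    have hbxF : b - x ∈ F := by
      have h1 := hkerF b
      have h2 := hkerF x
      rw [hxeq'] at h2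
      have := F.sub_mem h1 h2
      simpa using this
    have : x + (b - x) ∈ E' ⊔ F :=
      Submodule.add_mem _ (Submodule.mem_sup_left hxE') (Submodule.mem_sup_right hbxF)
    simpa using this
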